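/- Let d and n be positive integers, ε ∈ (0,1), and let p be the homogeneous Bernoulli missing-pattern distribution on 𝓜 = {0,1}^d, i.e. p_m = ε^{|m|}·(1−ε)^{d−|m|} where |m| denotes the number of ones in m. Then for every integer s with 1 ≤ s ≤ d, 𝔠_p(d/n) ≤ (d/n + ε^s)·(e·d/s)^s; in particular 𝔠_p(d/n) ≤ inf_{1≤s≤d} (d/n + ε^s)·(e·d/s)^s. -/

import Mathlib

lemma sum_pow_card_binom (d : ℕ) (a b : ℝ) :
    ∑ m : Fin d → Bool,
      a ^ (Finset.univ.filter (fun j => m j = true)).card *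
        b ^ (d - (Finset.univ.filter (fun j => m j = true)).card) = (a + b) ^ d := by
  have h : ∀ m : Fin d → Bool,
      a ^ (Finset.univ.filter (fun j => m j = true)).card *
        b ^ (d - (Finset.univ.filter (fun j => m j = true)).card)
      = ∏ j : Fin d, (if m j = true then a else b) := by
    intro m
    rw [Finset.prod_ite, Finset.prod_const, Finset.prod_const]
    congr 2
    have := Finset.card_filter_add_card_filter_not
      (s := (Finset.univ : Finset (Fin d))) (p := fun j => m j = true)
    simp only [Finset.card_univ, Fintype.card_fin] at this
    omega
  simp only [h]
  have key := Finset.prod_univ_sum (κ := fun _ : Fin d => Bool)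
    (t := fun _ => Finset.univ) (f := fun _ y => if y = true then a else b)
  simp only [Fintype.piFinset_univ] at key
  rw [← key]
  simp [Fintype.sum_bool]

theorem complexity_bernoulli_homogeneous (d n : ℕ) (hd : 0 < d) (hn : 0 < n)
    (ε : ℝ) (hε0 : 0 < ε) (hε1 : ε < 1) (s : ℕ) (hs1 : 1 ≤ s) (hsd : s ≤ d) :
    ∑ m : Fin d → Bool,
        min (ε ^ (Finset.univ.filter (fun j => m j = true)).card *
          (1 - ε) ^ (d - (Finset.univ.filter (fun j => m j = true)).card))
          ((d : ℝ) / (n : ℝ)) ≤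
      ((d : ℝ) / (n : ℝ) + ε ^ s) * (Real.exp 1 * (d : ℝ) / (s : ℝ)) ^ s := by
  set τ : ℝ := (d : ℝ) / (n : ℝ) with hτdef
  set D : ℝ := (d : ℝ) with hD
  set S : ℝ := (s : ℝ) with hS
  have hS0 : (0:ℝ) < S := by rw [hS]; exact_mod_cast hs1
  have hD0 : (0:ℝ) < D := by rw [hD]; exact_mod_cast hd
  have hSD : S ≤ D := by rw [hS, hD]; exact_mod_cast hsd
  have hτ0 : 0 ≤ τ := by positivity
  have h1ε0 : (0:ℝ) ≤ 1 - ε := by linarith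
  -- (e*D/S)^s = exp 1 ^ s * (D/S)^s  and  (1 + S/D)^d ≤ exp 1 ^ s
  have hRHSfact : (Real.exp 1 * D / S) ^ s = Real.exp 1 ^ s * (D / S) ^ s := by
    rw [mul_div_assoc, mul_pow]
  have hexp : (S / D + 1) ^ d ≤ Real.exp 1 ^ s := by
    have h1 : (S / D + 1) ^ d ≤ Real.exp (S / D) ^ d := by
      apply pow_le_pow_left₀ (by positivity)
      exact Real.add_one_le_exp _
    refine h1.trans_eq ?_
    rw [← Real.exp_nat_mul, Real.exp_one_pow]
    congr 1
    field_simp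
    rw [hS, hD]
  rcases le_or_gt ε (S / D) with hcase | hcase
  · -- small ε : full argument
    -- pointwise bound
    have hpt : ∀ m : Fin d → Bool,
        min (ε ^ (Finset.univ.filter (fun j => m j = true)).card *
          (1 - ε) ^ (d - (Finset.univ.filter (fun j => m j = true)).card)) τ ≤
        τ * (D / S) ^ s *
            ((S / D) ^ (Finset.univ.filter (fun j => m j = true)).card *
              (1:ℝ) ^ (d - (Finset.univ.filter (fun j => m j = true)).card)) +
        ε ^ s * (D / S) ^ s *
            ((S / D) ^ (Finset.univ.filter (fun j => m j = true)).card *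
              (1 - ε) ^ (d - (Finset.univ.filter (fun j => m j = true)).card)) := by
      intro m
      set c := (Finset.univ.filter (fun j => m j = true)).card with hc
      have hq0 : (0:ℝ) < S / D := by positivity
      rcases lt_or_ge c s with hcs | hcs
      · -- head: min ≤ τ ≤ first term
        have h1 : min (ε ^ c * (1 - ε) ^ (d - c)) τ ≤ τ := min_le_right _ _
        have h2 : τ ≤ τ * (D / S) ^ s * ((S / D) ^ c * (1:ℝ) ^ (d - c)) := by
          rw [one_pow, mul_one]
          have hfac : (1:ℝ) ≤ (D / S) ^ s * (S / D) ^ c := by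
            have e1 : (D / S) ^ s * (S / D) ^ c = (D / S) ^ (s - c) := by
              have : (D / S) ^ s = (D / S) ^ (s - c) * (D / S) ^ c := by
                rw [← pow_add]; congr 1; omega
              rw [this, mul_assoc, ← mul_pow]
              have : D / S * (S / D) = 1 := by field_simp
              rw [this, one_pow, mul_one]
            rw [e1]
            apply one_le_pow₀
            rw [le_div_iff₀ hS0]; linarith
          calc τ = τ * 1 := by ring
          _ ≤ τ * ((D / S) ^ s * (S / D) ^ c) := by
            apply mul_le_mul_of_nonneg_left hfac hτ0
          _ = τ * (D / S) ^ s * (S / D) ^ c := by ring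
        have h3 : (0:ℝ) ≤ ε ^ s * (D / S) ^ s * ((S / D) ^ c * (1 - ε) ^ (d - c)) := by
          positivity
        linarith
      · -- tail: min ≤ p ≤ second term
        have h1 : min (ε ^ c * (1 - ε) ^ (d - c)) τ ≤ ε ^ c * (1 - ε) ^ (d - c) :=
          min_le_left _ _
        have h2 : ε ^ c ≤ ε ^ s * (D / S) ^ s * (S / D) ^ c := by
          have hr1 : ε * (D / S) ≤ 1 := by
            rw [← le_div_iff₀ (by positivity)]
            rwa [one_div_div]
          have hr0 : 0 ≤ ε * (D / S) := by positivity
          have key : (ε * (D / S)) ^ c ≤ (ε * (D / S)) ^ s :=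
            pow_le_pow_of_le_one hr0 hr1 hcs
          have e1 : (ε * (D / S)) ^ c = ε ^ c * (D / S) ^ c := mul_pow _ _ _
          have e2 : (ε * (D / S)) ^ s = ε ^ s * (D / S) ^ s := mul_pow _ _ _
          have := key
          rw [e1, e2] at this
          have h4 : ε ^ c * (D / S) ^ c * (S / D) ^ c ≤ ε ^ s * (D / S) ^ s * (S / D) ^ c :=
            mul_le_mul_of_nonneg_right this (by positivity)
          have e3 : ε ^ c * (D / S) ^ c * (S / D) ^ c = ε ^ c := by
            rw [mul_assoc, ← mul_pow]
            have : D / S * (S / D) = 1 := by field_simp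
            rw [this, one_pow, mul_one]
          linarith [e3 ▸ h4]
        have h5 : ε ^ c * (1 - ε) ^ (d - c) ≤
            ε ^ s * (D / S) ^ s * ((S / D) ^ c * (1 - ε) ^ (d - c)) := by
          calc ε ^ c * (1 - ε) ^ (d - c)
              ≤ (ε ^ s * (D / S) ^ s * (S / D) ^ c) * (1 - ε) ^ (d - c) :=
                mul_le_mul_of_nonneg_right h2 (by positivity)
            _ = ε ^ s * (D / S) ^ s * ((S / D) ^ c * (1 - ε) ^ (d - c)) := by ring
        have h6 : (0:ℝ) ≤ τ * (D / S) ^ s * ((S / D) ^ c * (1:ℝ) ^ (d - c)) := by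
          positivity
        linarith
    -- sum the pointwise bounds
    have hsum : ∑ m : Fin d → Bool,
        min (ε ^ (Finset.univ.filter (fun j => m j = true)).card *
          (1 - ε) ^ (d - (Finset.univ.filter (fun j => m j = true)).card)) τ ≤
        τ * (D / S) ^ s * (S / D + 1) ^ d +
        ε ^ s * (D / S) ^ s * (S / D + (1 - ε)) ^ d := by
      calc ∑ m : Fin d → Bool,
          min (ε ^ (Finset.univ.filter (fun j => m j = true)).card *
            (1 - ε) ^ (d - (Finset.univ.filter (fun j => m j = true)).card)) τ
          ≤ ∑ m : Fin d → Bool,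
            (τ * (D / S) ^ s *
              ((S / D) ^ (Finset.univ.filter (fun j => m j = true)).card *
                (1:ℝ) ^ (d - (Finset.univ.filter (fun j => m j = true)).card)) +
            ε ^ s * (D / S) ^ s *
              ((S / D) ^ (Finset.univ.filter (fun j => m j = true)).card *
                (1 - ε) ^ (d - (Finset.univ.filter (fun j => m j = true)).card))) :=
            Finset.sum_le_sum (fun m _ => hpt m)
        _ = τ * (D / S) ^ s * (S / D + 1) ^ d +
            ε ^ s * (D / S) ^ s * (S / D + (1 - ε)) ^ d := by
            rw [Finset.sum_add_distrib, ← Finset.mul_sum, ← Finset.mul_sum,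
              sum_pow_card_binom, sum_pow_card_binom]
    refine hsum.trans ?_
    have he1 : (S / D + (1 - ε)) ^ d ≤ Real.exp 1 ^ s := by
      refine le_trans ?_ hexp
      apply pow_le_pow_left₀ (by positivity)
      linarith
    rw [hRHSfact]
    have hA : τ * (D / S) ^ s * (S / D + 1) ^ d ≤ τ * (D / S) ^ s * Real.exp 1 ^ s :=
      mul_le_mul_of_nonneg_left hexp (by positivity)
    have hB : ε ^ s * (D / S) ^ s * (S / D + (1 - ε)) ^ d ≤
        ε ^ s * (D / S) ^ s * Real.exp 1 ^ s :=
      mul_le_mul_of_nonneg_left he1 (by positivity)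
    nlinarith [hA, hB]
  · -- large ε : LHS ≤ 1 ≤ ε^s (D/S)^s
    have hsum : ∑ m : Fin d → Bool,
        min (ε ^ (Finset.univ.filter (fun j => m j = true)).card *
          (1 - ε) ^ (d - (Finset.univ.filter (fun j => m j = true)).card)) τ ≤ (1:ℝ) := by
      calc ∑ m : Fin d → Bool,
          min (ε ^ (Finset.univ.filter (fun j => m j = true)).card *
            (1 - ε) ^ (d - (Finset.univ.filter (fun j => m j = true)).card)) τ
          ≤ ∑ m : Fin d → Bool,
            ε ^ (Finset.univ.filter (fun j => m j = true)).card *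
              (1 - ε) ^ (d - (Finset.univ.filter (fun j => m j = true)).card) :=
            Finset.sum_le_sum (fun m _ => min_le_left _ _)
        _ = (ε + (1 - ε)) ^ d := sum_pow_card_binom d ε (1 - ε)
        _ = 1 := by norm_num
    refine hsum.trans ?_
    have h1 : (1:ℝ) ≤ (ε * (D / S)) ^ s := by
      apply one_le_pow₀
      rw [← div_le_iff₀ (by positivity : (0:ℝ) < D / S), one_div_div]
      exact hcase.le
    have h2 : (ε * (D / S)) ^ s ≤ (τ + ε ^ s) * (Real.exp 1 * D / S) ^ s := by
      have he1 : (1:ℝ) ≤ Real.exp 1 := by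
        have := Real.add_one_le_exp (1:ℝ); linarith
      have step : (ε * (D / S)) ^ s ≤ (ε * (Real.exp 1 * D / S)) ^ s := by
        apply pow_le_pow_left₀ (by positivity)
        have : D / S ≤ Real.exp 1 * D / S := by
          rw [mul_div_assoc]
          nlinarith [div_pos hD0 hS0]
        nlinarith
      refine step.trans ?_
      rw [mul_pow]
      have : ε ^ s * (Real.exp 1 * D / S) ^ s ≤ (τ + ε ^ s) * (Real.exp 1 * D / S) ^ s := by
        apply mul_le_mul_of_nonneg_right (by linarith) (by positivity)
      linarith
    exact h1.trans h2
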